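/- The trace on the fermion Fock space is represented by a Grassmann integral: for every A ∈ B(∧H), tr_{∧H}(A) = (-1)^{|M|} ∫D(Ψ̄,Ψ) Θ(A). In particular, for I = J ordered subsets, tr_{∧H}(c*_{i_1}···c*_{i_m} c_{i_1}···c_{i_m}) = (-1)^{m(m-1)/2} 2^{|M|-m}. -/

import Mathlib

open Finset Matrix
open scoped Classical ComplexOrder Kronecker

noncomputable section

namespace Grassmann

/-- Coefficient model of the Grassmann algebra over ℂ with generators indexed by a
linearly ordered finite type `ι`: an element is given by its coefficients in the
basis of increasingly ordered monomials, indexed by `Finset ι`. -/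
abbrev Car (ι : Type) := Finset ι → ℂ

variable {ι κ : Type} [LinearOrder ι] [LinearOrder κ]

/-- The unit (empty monomial). -/
def gone : Car ι := fun s => if s = ∅ then 1 else 0

/-- The sign produced when concatenating two increasing monomials. -/
def mulSign (s t : Finset ι) : ℂ :=
  (-1) ^ ((s ×ˢ t).filter fun p => p.2 < p.1).card

/-- The (ordinary, anticommutative) Grassmann product. -/
def gmul (f g : Car ι) : Car ι := fun u =>
  ∑ s ∈ u.powerset, mulSign s (u \ s) * f s * g (u \ s)

/-- A generator of the Grassmann algebra. -/
def gen (x : ι) : Car ι := fun s => if s = {x} then 1 else 0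

/-- Product of a list of Grassmann elements. -/
def lprod : List (Car ι) → Car ι := fun l => l.foldr gmul gone

/-- Powers with respect to the Grassmann product. -/
def gpow (f : Car ι) : ℕ → Car ι
  | 0 => gone
  | n + 1 => gmul f (gpow f n)

/-- The left derivation `δ/δx`. -/
def gderiv (x : ι) (f : Car ι) : Car ι := fun t =>
  if x ∈ t then 0
  else (-1) ^ (t.filter fun y => y < x).card * f (insert x t)

/-- The exponential of a Grassmann element (a finite sum by nilpotency). -/
def gexp [Fintype ι] (f : Car ι) : Car ι :=
  ∑ m ∈ Finset.range (2 * Fintype.card ι + 1), ((Nat.factorial m : ℂ)⁻¹) • gpow f m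

/-- The sign produced when relabelling generators along an injection. -/
def relabelSign (g : ι ↪ κ) (s : Finset ι) : ℂ :=
  (-1) ^ ((s ×ˢ s).filter fun p => p.1 < p.2 ∧ g p.2 < g p.1).card

/-- The algebra homomorphism induced by relabelling generators along an injection. -/
def relabel [Fintype ι] (g : ι ↪ κ) (f : Car ι) : Car κ := fun t =>
  ∑ s : Finset ι, if s.map g = t then relabelSign g s * f s else 0

variable (M : Type) [Fintype M] [LinearOrder M]

/-- Index type for the generators `ψ̄ᵢ` (`true`) and `ψᵢ` (`false`). -/
abbrev Idx := Bool ×ₗ M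

instance : Fintype (Idx M) := inferInstanceAs (Fintype (Bool × M))

/-- The generator `ψᵢ`. -/
def psi (i : M) : Car (Idx M) := gen (toLex (false, i))

/-- The generator `ψ̄ᵢ`. -/
def psibar (i : M) : Car (Idx M) := gen (toLex (true, i))

/-- The elements of a finite set in increasing order. -/
def msort (s : Finset M) : List M := s.sort (· ≤ ·)

/-- `Ψ_J = ψ_{j₁} ⋯ ψ_{j_n}` for the ordered set `J`. -/
def psiProd (J : Finset M) : Car (Idx M) := lprod ((msort M J).map (psi M))

/-- `Ψ̄_I = ψ̄_{i₁} ⋯ ψ̄_{i_m}` for the ordered set `I`. -/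
def psibarProd (I : Finset M) : Car (Idx M) := lprod ((msort M I).map (psibar M))

/-- The normal-ordered monomial `Ψ̄_I Ψ_J`. -/
def nmono (I J : Finset M) : Car (Idx M) := gmul (psibarProd M I) (psiProd M J)

/-- The Grassmann integral `∫ d(Ψ̄,Ψ) = ∏_{α∈M} δ/δψ̄_α δ/δψ_α`. -/
def gintegral (f : Car (Idx M)) : ℂ :=
  ((msort M univ).foldr
    (fun i g => gderiv (toLex (true, i)) (gderiv (toLex (false, i)) g)) f) ∅

/-- The pairing `(Ψ̄,Ψ) = ∑ᵢ ψ̄ᵢ ψᵢ`. -/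
def pairPsi : Car (Idx M) := ∑ i : M, gmul (psibar M i) (psi M i)

/-- The weight `e^{2(Ψ̄,Ψ)} = ∏_α (1 + 2 ψ̄_α ψ_α)`. -/
def weight : Car (Idx M) :=
  lprod ((msort M univ).map fun i => gone + (2 : ℂ) • gmul (psibar M i) (psi M i))

/-- The weighted Grassmann integral `∫ 𝒟(Ψ̄,Ψ) = ∫ d(Ψ̄,Ψ) e^{2(Ψ̄,Ψ)}`. -/
def wintegral (f : Car (Idx M)) : ℂ := gintegral M (gmul (weight M) f)

/-- Index type for the doubled algebra in the variables `ψ̄, ψ` (family `false`)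
and `φ̄, φ` (family `true`). -/
abbrev BIdx := Bool ×ₗ (Idx M)

instance : Fintype (BIdx M) := inferInstanceAs (Fintype (Bool × (Bool × M)))

/-- The (order-preserving) embedding of the `ψ`-variables into the doubled algebra. -/
def embPsi : Idx M ↪ BIdx M :=
  ⟨fun x => toLex (false, x), fun a b h => congrArg (fun z : BIdx M => (ofLex z).2) h⟩

/-- Substitution `μ(ψ̄,ψ) ↦ μ(ψ̄,φ)`. -/
def subMu : Idx M ↪ BIdx M :=
  ⟨fun x => toLex (!(ofLex x).1, x), fun a b h => congrArg (fun z : BIdx M => (ofLex z).2) h⟩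

/-- Substitution `η(ψ̄,ψ) ↦ η(φ̄,ψ)`. -/
def subEta : Idx M ↪ BIdx M :=
  ⟨fun x => toLex ((ofLex x).1, x), fun a b h => congrArg (fun z : BIdx M => (ofLex z).2) h⟩

/-- Generator `ψᵢ` in the doubled algebra. -/
def psiB (i : M) : Car (BIdx M) := gen (toLex (false, toLex (false, i)))
/-- Generator `ψ̄ᵢ` in the doubled algebra. -/
def psibarB (i : M) : Car (BIdx M) := gen (toLex (false, toLex (true, i)))
/-- Generator `φᵢ` in the doubled algebra. -/
def phiB (i : M) : Car (BIdx M) := gen (toLex (true, toLex (false, i)))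
/-- Generator `φ̄ᵢ` in the doubled algebra. -/
def phibarB (i : M) : Car (BIdx M) := gen (toLex (true, toLex (true, i)))

/-- Pairing `(Ā,B) = ∑ᵢ āᵢ bᵢ` in the doubled algebra. -/
def pairB (f g : M → Car (BIdx M)) : Car (BIdx M) := ∑ i : M, gmul (f i) (g i)

/-- The kernel `e^{-(Ψ̄,Ψ)} e^{(Ψ̄,Φ)} e^{-(Φ̄,Φ)} e^{(Φ̄,Ψ)}`. -/
def kernel : Car (BIdx M) :=
  gmul (gexp (-(pairB M (psibarB M) (psiB M))))
    (gmul (gexp (pairB M (psibarB M) (phiB M)))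
      (gmul (gexp (-(pairB M (phibarB M) (phiB M))))
        (gexp (pairB M (phibarB M) (psiB M)))))

/-- Integration over the `φ` variables, `∫ d(Φ̄,Φ)`. -/
def intPhi (f : Car (BIdx M)) : Car (BIdx M) :=
  ((msort M univ).foldr
    (fun i g => gderiv (toLex (true, toLex (true, i)))
      (gderiv (toLex (true, toLex (false, i))) g)) f)

/-- Reading off the result (in the `ψ` variables only) after `φ`-integration. -/
def projBack (f : Car (BIdx M)) : Car (Idx M) := fun s => f (s.map (embPsi M))

/-- The star product
`(μ⋆η)(ψ̄,ψ) = ∫ d(Φ̄,Φ) μ(ψ̄,φ) η(φ̄,ψ) e^{-(Ψ̄,Ψ)} e^{(Ψ̄,Φ)} e^{-(Φ̄,Φ)} e^{(Φ̄,Ψ)}`. -/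
def gstar (μ η : Car (Idx M)) : Car (Idx M) :=
  projBack M (intPhi M
    (gmul (relabel (subMu M) μ) (gmul (relabel (subEta M) η) (kernel M))))

/-- Star product of a list. -/
def lstar (l : List (Car (Idx M))) : Car (Idx M) := l.foldr (gstar M) (gone)

/-- Swapping `ψᵢ ↔ ψ̄ᵢ`. -/
def barSwap : Idx M → Idx M := fun x => toLex (!(ofLex x).1, (ofLex x).2)

/-- The sign of the involution on a basis monomial. -/
def involSign (s : Finset (Idx M)) : ℂ :=
  (-1) ^ ((s ×ˢ s).filter fun p => p.1 < p.2 ∧ barSwap M p.1 < barSwap M p.2).card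

/-- The involution `*` of the Grassmann algebra: antilinear, `ψᵢ* = ψ̄ᵢ`, `ψ̄ᵢ* = ψᵢ`,
reversing products. -/
def ginvol (f : Car (Idx M)) : Car (Idx M) := fun t =>
  involSign M (t.image (barSwap M)) * (starRingEnd ℂ) (f (t.image (barSwap M)))

/-! ### The fermion Fock space `∧H` and the normal-ordering map `Θ` -/

/-- The fermion Fock space over `H = ℂ^M`, in the occupation basis. -/
abbrev Fock := Finset M → ℂ

/-- The creation operator `c*ᵢ`. -/
def createL (i : M) : Fock M →ₗ[ℂ] Fock M where
  toFun f := fun s =>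
    if i ∈ s then (-1) ^ (((s.erase i)).filter fun j => j < i).card * f (s.erase i) else 0
  map_add' f g := by funext s; by_cases h : i ∈ s <;> simp [h, mul_add]
  map_smul' c f := by funext s; by_cases h : i ∈ s <;> simp [h] <;> ring

/-- The annihilation operator `cᵢ`. -/
def annihL (i : M) : Fock M →ₗ[ℂ] Fock M where
  toFun f := fun s =>
    if i ∈ s then 0 else (-1) ^ (s.filter fun j => j < i).card * f (insert i s)
  map_add' f g := by funext s; by_cases h : i ∈ s <;> simp [h, mul_add]
  map_smul' c f := by funext s; by_cases h : i ∈ s <;> simp [h] <;> ring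

/-- The normal-ordered operator monomial `c*_{i₁}⋯c*_{i_m} c_{j₁}⋯c_{j_n}`
for ordered sets `I`, `J`. -/
def cOp (I J : Finset M) : Fock M →ₗ[ℂ] Fock M :=
  ((msort M I).map (createL M)).prod * ((msort M J).map (annihL M)).prod

/-- The adjoint of an operator on the Fock space. -/
def adjOp (A : Fock M →ₗ[ℂ] Fock M) : Fock M →ₗ[ℂ] Fock M :=
  Matrix.toLin (Pi.basisFun ℂ (Finset M)) (Pi.basisFun ℂ (Finset M))
    ((LinearMap.toMatrix (Pi.basisFun ℂ (Finset M)) (Pi.basisFun ℂ (Finset M)) A).conjTranspose)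

/-! ### Density matrices of a Grassmann density -/

/-- The one-particle density matrix `γ_th`, `⟨ψ_k, γ_th ψ_l⟩ = ∫𝒟 th*⋆th⋆ψ̄_l⋆ψ_k`. -/
def gammaM (th : Car (Idx M)) : Matrix M M ℂ := fun k l =>
  wintegral M (gstar M (gstar M (ginvol M th) th) (gstar M (psibar M l) (psi M k)))

/-- The two-particle density matrix `Γ_th`,
`⟨ψ_m⊗ψ_n, Γ_th (ψ_l⊗ψ_k)⟩ = ∫𝒟 th*⋆th⋆ψ̄_k⋆ψ̄_l⋆ψ_m⋆ψ_n`. -/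
def GammaM (th : Car (Idx M)) : Matrix (M × M) (M × M) ℂ := fun p q =>
  wintegral M (gstar M (gstar M (ginvol M th) th)
    (gstar M (psibar M q.2) (gstar M (psibar M q.1) (gstar M (psi M p.1) (psi M p.2)))))

/-- Positive semi-definiteness of a complex matrix: `⟨x, A x⟩ ≥ 0` for all vectors. -/
def PSDvec {n : Type} [Fintype n] (A : Matrix n n ℂ) : Prop :=
  ∀ x : n → ℂ, 0 ≤ star x ⬝ᵥ A.mulVec x

/-- The exchange operator `Ex (f⊗g) = g⊗f` on `H⊗H`. -/
def ExM : Matrix (M × M) (M × M) ℂ := fun p q =>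
  if p.1 = q.2 ∧ p.2 = q.1 then 1 else 0

end Grassmann
namespace Grassmann

section General

variable {ι κ : Type} [LinearOrder ι] [LinearOrder κ]

/-- Basis delta function. -/
def delta (s : Finset ι) : Car ι := fun t => if t = s then 1 else 0

lemma gen_eq_delta (x : ι) : gen x = delta {x} := rfl

lemma gone_eq_delta : (gone : Car ι) = delta ∅ := rfl

lemma mulSign_empty_left (t : Finset ι) : mulSign (∅ : Finset ι) t = 1 := by
  simp [mulSign]

lemma mulSign_of_forall_not {s t : Finset ι} (h : ∀ a ∈ s, ∀ b ∈ t, ¬ b < a) :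
    mulSign s t = 1 := by
  unfold mulSign
  rw [Finset.filter_false_of_mem, Finset.card_empty, pow_zero]
  rintro ⟨a, b⟩ hab
  rw [Finset.mem_product] at hab
  exact h a hab.1 b hab.2

lemma mulSign_of_forall_lt {s t : Finset ι} (h : ∀ a ∈ s, ∀ b ∈ t, b < a) :
    mulSign s t = (-1) ^ (s.card * t.card) := by
  unfold mulSign
  rw [Finset.filter_true_of_mem, Finset.card_product]
  rintro ⟨a, b⟩ hab
  rw [Finset.mem_product] at hab
  exact h a hab.1 b hab.2

lemma mulSign_union_left {s₁ s₂ : Finset ι} (t : Finset ι) (h : Disjoint s₁ s₂) :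
    mulSign (s₁ ∪ s₂) t = mulSign s₁ t * mulSign s₂ t := by
  unfold mulSign
  rw [Finset.union_product, Finset.filter_union, Finset.card_union_of_disjoint, pow_add]
  refine Finset.disjoint_filter_filter ?_
  rw [Finset.disjoint_left]
  rintro ⟨a, b⟩ hab hab'
  rw [Finset.mem_product] at hab hab'
  exact (Finset.disjoint_left.1 h) hab.1 hab'.1

lemma mulSign_union_right (s : Finset ι) {t₁ t₂ : Finset ι} (h : Disjoint t₁ t₂) :
    mulSign s (t₁ ∪ t₂) = mulSign s t₁ * mulSign s t₂ := by
  unfold mulSign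
  rw [Finset.product_union, Finset.filter_union, Finset.card_union_of_disjoint, pow_add]
  refine Finset.disjoint_filter_filter ?_
  rw [Finset.disjoint_left]
  rintro ⟨a, b⟩ hab hab'
  rw [Finset.mem_product] at hab hab'
  exact (Finset.disjoint_left.1 h) hab.2 hab'.2

lemma mulSign_mul_self (s t : Finset ι) : mulSign s t * mulSign s t = 1 := by
  unfold mulSign
  rw [← pow_add, ← two_mul, pow_mul]
  simp

lemma mulSign_image (f : ι → κ) (hf : StrictMono f) (s t : Finset ι) :
    mulSign (s.image f) (t.image f) = mulSign s t := by
  unfold mulSign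
  congr 1
  have himg : ((s.image f) ×ˢ (t.image f)).filter (fun p => p.2 < p.1)
      = (((s ×ˢ t).filter (fun p => p.2 < p.1)).image (Prod.map f f)) := by
    ext ⟨a, b⟩
    simp only [Finset.mem_filter, Finset.mem_product, Finset.mem_image, Prod.exists,
      Prod.map_apply]
    constructor
    · rintro ⟨⟨⟨x, hx, rfl⟩, ⟨y, hy, rfl⟩⟩, hlt⟩
      exact ⟨x, y, ⟨⟨hx, hy⟩, hf.lt_iff_lt.1 hlt⟩, rfl⟩
    · rintro ⟨x, y, ⟨⟨hx, hy⟩, hlt⟩, h⟩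
      aesop
  rw [himg, Finset.card_image_of_injective _ (hf.injective.prodMap hf.injective)]

lemma gmul_delta_left (A : Finset ι) (f : Car ι) (u : Finset ι) :
    gmul (delta A) f u = if A ⊆ u then mulSign A (u \ A) * f (u \ A) else 0 := by
  unfold gmul
  rw [show (∑ s ∈ u.powerset, mulSign s (u \ s) * delta A s * f (u \ s))
      = ∑ s ∈ u.powerset, if s = A then mulSign A (u \ A) * f (u \ A) else 0 from
    Finset.sum_congr rfl fun s _ => by by_cases h : s = A <;> simp [delta, h]]
  rw [Finset.sum_ite_eq' u.powerset A]
  simp only [Finset.mem_powerset]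

lemma gmul_delta_right (f : Car ι) (B u : Finset ι) :
    gmul f (delta B) u = if B ⊆ u then mulSign (u \ B) B * f (u \ B) else 0 := by
  unfold gmul
  by_cases hBu : B ⊆ u
  · rw [if_pos hBu]
    rw [show (∑ s ∈ u.powerset, mulSign s (u \ s) * f s * delta B (u \ s))
        = ∑ s ∈ u.powerset, if s = u \ B then mulSign (u \ B) B * f (u \ B) else 0 from
      Finset.sum_congr rfl fun s hs => by
        rw [Finset.mem_powerset] at hs
        by_cases h : s = u \ B
        · subst h
          have h2 : u \ (u \ B) = B := Finset.sdiff_sdiff_eq_self hBu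
          simp [delta, h2]
        · have h2 : u \ s ≠ B := fun hc => h (by rw [← hc, Finset.sdiff_sdiff_eq_self hs])
          simp [delta, h2, h]]
    rw [Finset.sum_ite_eq' u.powerset]
    simp only [Finset.mem_powerset]
    rw [if_pos Finset.sdiff_subset]
  · rw [if_neg hBu]
    refine Finset.sum_eq_zero fun s hs => ?_
    have h2 : u \ s ≠ B := fun hc => hBu (hc ▸ Finset.sdiff_subset)
    simp [delta, h2]

lemma gmul_add_left (f g h : Car ι) : gmul (f + g) h = gmul f h + gmul g h := by
  funext u
  show _ = gmul f h u + gmul g h u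
  unfold gmul
  rw [← Finset.sum_add_distrib]
  exact Finset.sum_congr rfl fun s _ => by simp [Pi.add_apply]; ring

lemma gmul_smul_left (c : ℂ) (f h : Car ι) : gmul (c • f) h = c • gmul f h := by
  funext u
  simp only [gmul, Pi.smul_apply, smul_eq_mul, Finset.mul_sum]
  exact Finset.sum_congr rfl fun s _ => by ring

lemma gmul_add_right (w f g : Car ι) : gmul w (f + g) = gmul w f + gmul w g := by
  funext u
  show _ = gmul w f u + gmul w g u
  unfold gmul
  rw [← Finset.sum_add_distrib]
  exact Finset.sum_congr rfl fun s _ => by simp [Pi.add_apply]; ring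

lemma gmul_smul_right (c : ℂ) (w f : Car ι) : gmul w (c • f) = c • gmul w f := by
  funext u
  simp only [gmul, Pi.smul_apply, smul_eq_mul, Finset.mul_sum]
  exact Finset.sum_congr rfl fun s _ => by ring

lemma gmul_delta_empty_left (f : Car ι) : gmul (delta ∅) f = f := by
  funext u
  rw [gmul_delta_left, if_pos (Finset.empty_subset u), mulSign_empty_left, one_mul,
    Finset.sdiff_empty]

lemma lprod_map_gen (l : List ι) (hl : l.Pairwise (· < ·)) :
    lprod (l.map gen) = delta l.toFinset := by
  induction l with
  | nil =>
    funext u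
    simp [lprod, gone, delta]
    congr
  | cons x l ih =>
    have hx : ∀ y ∈ l.toFinset, x < y := fun y hy =>
      (List.pairwise_cons.1 hl).1 y (List.mem_toFinset.1 hy)
    have hxn : x ∉ l.toFinset := fun h => lt_irrefl x (hx x h)
    rw [List.map_cons, List.toFinset_cons]
    show gmul (gen x) (lprod (l.map gen)) = _
    rw [ih (List.pairwise_cons.1 hl).2, gen_eq_delta]
    funext u
    rw [gmul_delta_left]
    by_cases hu : u = insert x l.toFinset
    · subst hu
      have h1 : {x} ⊆ insert x l.toFinset := by simp
      have h2 : insert x l.toFinset \ {x} = l.toFinset := by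
        rw [Finset.sdiff_singleton_eq_erase, Finset.erase_insert hxn]
      rw [if_pos h1, h2]
      simp only [delta, if_pos rfl]
      rw [mulSign_of_forall_not, one_mul]
      intro a ha b hb hba
      rw [Finset.mem_singleton] at ha
      subst ha
      exact absurd (hx b hb) (not_lt.2 hba.le)
    · simp only [delta, if_neg hu]
      by_cases h1 : {x} ⊆ u
      · rw [if_pos h1]
        have h2 : u \ {x} ≠ l.toFinset := by
          intro hc
          apply hu
          rw [← hc, Finset.sdiff_singleton_eq_erase,
            Finset.insert_erase (h1 (Finset.mem_singleton_self x))]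
        simp only [delta, if_neg h2, mul_zero]
      · rw [if_neg h1]

end General

end Grassmann
namespace Grassmann

section IdxLemmas

variable (M : Type) [Fintype M] [LinearOrder M]

/-- `ψ`-type generator index. -/
abbrev fB (i : M) : Idx M := toLex (false, i)
/-- `ψ̄`-type generator index. -/
abbrev fT (i : M) : Idx M := toLex (true, i)

lemma idx_rec {P : Idx M → Prop} (h : ∀ b i, P (toLex (b, i))) : ∀ x, P x :=
  fun x => h (ofLex x).1 (ofLex x).2

lemma fB_injective : Function.Injective (fB M) := fun a b h =>
  congrArg (fun z : Idx M => (ofLex z).2) h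

lemma fT_injective : Function.Injective (fT M) := fun a b h =>
  congrArg (fun z : Idx M => (ofLex z).2) h

lemma fB_strictMono : StrictMono (fB M) := fun a b h =>
  Prod.Lex.lt_iff.2 (Or.inr ⟨rfl, h⟩)

lemma fT_strictMono : StrictMono (fT M) := fun a b h =>
  Prod.Lex.lt_iff.2 (Or.inr ⟨rfl, h⟩)

lemma fB_lt_fT (i j : M) : fB M i < fT M j :=
  Prod.Lex.lt_iff.2 (Or.inl (by simp))

lemma not_fT_lt_fB (i j : M) : ¬ fT M i < fB M j := by
  rw [Prod.Lex.lt_iff]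
  rintro (h | ⟨h, -⟩)
  · simp [Bool.lt_iff] at h
  · simp at h

lemma fB_lt_fB {i j : M} : fB M i < fB M j ↔ i < j :=
  ⟨fun h => by rcases Prod.Lex.lt_iff.1 h with h | ⟨-, h⟩ <;> simp_all,
   fun h => fB_strictMono M h⟩

lemma fT_lt_fT {i j : M} : fT M i < fT M j ↔ i < j :=
  ⟨fun h => by rcases Prod.Lex.lt_iff.1 h with h | ⟨-, h⟩ <;> simp_all,
   fun h => fT_strictMono M h⟩

lemma fB_ne_fT (i j : M) : fB M i ≠ fT M j := fun h => by
  have := congrArg (fun z : Idx M => (ofLex z).1) h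
  simp at this

/-- The set of the `2|S|` generator indices attached to `S`. -/
def pairs (S : Finset M) : Finset (Idx M) := S.image (fB M) ∪ S.image (fT M)

lemma mem_pairs {S : Finset M} (b : Bool) (j : M) :
    toLex (b, j) ∈ pairs M S ↔ j ∈ S := by
  cases b <;> simp [pairs, Finset.mem_image, fB, fT]

lemma mem_pairs' {S : Finset M} {x : Idx M} : x ∈ pairs M S ↔ (ofLex x).2 ∈ S :=
  idx_rec M (P := fun x => x ∈ pairs M S ↔ (ofLex x).2 ∈ S)
    (fun b j => mem_pairs M b j) x

lemma disjoint_imageB_imageT (S T : Finset M) :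
    Disjoint (S.image (fB M)) (T.image (fT M)) := by
  rw [Finset.disjoint_left]
  rintro x hx hx'
  rw [Finset.mem_image] at hx hx'
  obtain ⟨a, -, rfl⟩ := hx
  obtain ⟨b, -, h⟩ := hx'
  exact fB_ne_fT M a b h.symm

lemma card_pairs (S : Finset M) : (pairs M S).card = 2 * S.card := by
  rw [pairs, Finset.card_union_of_disjoint (disjoint_imageB_imageT M S S),
    Finset.card_image_of_injective _ (fB_injective M),
    Finset.card_image_of_injective _ (fT_injective M)]
  ring

lemma pairs_empty : pairs M ∅ = ∅ := by simp [pairs]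

lemma pairs_inj {S T : Finset M} (h : pairs M S = pairs M T) : S = T := by
  ext j
  have := Finset.ext_iff.1 h (toLex (false, j))
  rwa [mem_pairs, mem_pairs] at this

end IdxLemmas

end Grassmann
namespace Grassmann

section IntegralLemmas

variable (M : Type) [Fintype M] [LinearOrder M]

lemma Dstep (i : M) (t : Finset M) (h : ∀ j ∈ t, j < i) (g : Car (Idx M)) :
    gderiv (toLex (true, i)) (gderiv (toLex (false, i)) g) (pairs M t)
      = (-1) ^ t.card * g (pairs M (insert i t)) := by
  have hit : i ∉ t := fun hi => lt_irrefl i (h i hi)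
  have h1 : fT M i ∉ pairs M t := by rw [mem_pairs]; exact hit
  have h2 : fB M i ∉ insert (fT M i) (pairs M t) := by
    rw [Finset.mem_insert, mem_pairs]
    rintro (hc | hc)
    · exact fB_ne_fT M i i hc
    · exact hit hc
  show (if fT M i ∈ pairs M t then 0 else
      (-1) ^ (((pairs M t).filter fun y => y < fT M i).card) *
        gderiv (fB M i) g (insert (fT M i) (pairs M t))) = _
  rw [if_neg h1]
  have hA : ((pairs M t).filter fun y => y < fT M i) = pairs M t := by
    refine Finset.filter_true_of_mem fun x hx => ?_
    revert hx
    refine idx_rec M (P := fun x => x ∈ pairs M t → x < fT M i) (fun b j hj => ?_) x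
    rw [mem_pairs] at hj
    cases b
    · exact fB_lt_fT M j i
    · exact (fT_lt_fT M).2 (h j hj)
  rw [hA, card_pairs]
  show _ * (if fB M i ∈ insert (fT M i) (pairs M t) then 0 else
      (-1) ^ (((insert (fT M i) (pairs M t)).filter fun y => y < fB M i).card) *
        g (insert (fB M i) (insert (fT M i) (pairs M t)))) = _
  rw [if_neg h2]
  have hB : ((insert (fT M i) (pairs M t)).filter fun y => y < fB M i)
      = t.image (fB M) := by
    rw [Finset.filter_insert, if_neg (not_fT_lt_fB M i i)]
    ext x
    revert x
    refine idx_rec M (P := fun x =>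
      x ∈ (pairs M t).filter (fun y => y < fB M i) ↔ x ∈ t.image (fB M)) (fun b j => ?_)
    rw [Finset.mem_filter, mem_pairs]
    cases b
    · simp only [Finset.mem_image]
      constructor
      · rintro ⟨hj, -⟩; exact ⟨j, hj, rfl⟩
      · rintro ⟨a, ha, hax⟩
        have : a = j := fB_injective M hax
        subst this
        refine ⟨ha, (fB_lt_fB M).2 (h a ha)⟩
    · constructor
      · rintro ⟨-, hlt⟩; exact absurd hlt (not_fT_lt_fB M j i)
      · intro hx
        rw [Finset.mem_image] at hx
        obtain ⟨a, -, hax⟩ := hx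
        exact absurd hax (fB_ne_fT M a j)
  rw [hB, Finset.card_image_of_injective _ (fB_injective M)]
  have hset : insert (fB M i) (insert (fT M i) (pairs M t)) = pairs M (insert i t) := by
    ext x
    revert x
    refine idx_rec M (P := fun x =>
      x ∈ insert (fB M i) (insert (fT M i) (pairs M t)) ↔ x ∈ pairs M (insert i t))
      (fun b j => ?_)
    rw [Finset.mem_insert, Finset.mem_insert, mem_pairs, mem_pairs, Finset.mem_insert]
    cases b
    · constructor
      · rintro (hx | hx | hx)
        · exact Or.inl (fB_injective M hx)
        · exact absurd hx (fB_ne_fT M j i)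
        · exact Or.inr hx
      · rintro (rfl | hx)
        · exact Or.inl rfl
        · exact Or.inr (Or.inr hx)
    · constructor
      · rintro (hx | hx | hx)
        · exact absurd hx.symm (fB_ne_fT M i j)
        · exact Or.inl (fT_injective M hx)
        · exact Or.inr hx
      · rintro (rfl | hx)
        · exact Or.inr (Or.inl rfl)
        · exact Or.inr (Or.inr hx)
  have hsq : (-1 : ℂ) ^ (2 * t.card) * (-1) ^ t.card = (-1) ^ t.card := by
    rw [pow_mul, neg_one_sq, one_pow, one_mul]
  rw [hset, ← mul_assoc, hsq]

lemma fold_eval : ∀ (l : List M), l.Pairwise (· < ·) →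
    ∀ (t : Finset M), (∀ i ∈ l, ∀ j ∈ t, j < i) → ∀ (f : Car (Idx M)),
    (l.foldr (fun i g => gderiv (toLex (true, i)) (gderiv (toLex (false, i)) g)) f)
        (pairs M t)
      = (-1) ^ (l.length * t.card + l.length.choose 2) * f (pairs M (t ∪ l.toFinset)) := by
  intro l
  induction l with
  | nil =>
    intro _ t _ f
    simp
  | cons i l ih =>
    intro hl t ht f
    have hsm := List.pairwise_cons.1 hl
    rw [List.foldr_cons]
    rw [Dstep M i t (ht i (List.mem_cons_self)) _]
    rw [ih hsm.2 (insert i t) (fun i' hi' j hj => by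
        rcases Finset.mem_insert.1 hj with rfl | hj
        · exact hsm.1 i' hi'
        · exact lt_trans (ht i (List.mem_cons_self) j hj) (hsm.1 i' hi')) f]
    have hit : i ∉ t := fun hi => lt_irrefl i (ht i (List.mem_cons_self) i hi)
    rw [Finset.card_insert_of_notMem hit]
    have hset : insert i t ∪ l.toFinset = t ∪ (i :: l).toFinset := by
      rw [List.toFinset_cons]
      ext x
      simp only [Finset.mem_union, Finset.mem_insert]
      tauto
    rw [hset, ← mul_assoc, ← pow_add]
    congr 2
    have hch : (l.length + 1).choose 2 = l.length.choose 2 + l.length := by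
      rw [Nat.choose_succ_succ, Nat.choose_one_right]
      exact Nat.add_comm _ _
    simp only [List.length_cons, hch]
    ring

lemma gintegral_eq (f : Car (Idx M)) :
    gintegral M f = (-1) ^ ((Fintype.card M).choose 2) * f Finset.univ := by
  have hpe : (∅ : Finset (Idx M)) = pairs M ∅ := (pairs_empty M).symm
  have hpu : pairs M Finset.univ = Finset.univ := by
    ext x
    simp [mem_pairs' M]
  unfold gintegral
  rw [hpe, fold_eval M (msort M Finset.univ) ((Finset.sortedLT_sort _).pairwise) ∅
    (fun _ _ j hj => absurd hj (Finset.notMem_empty j)) f]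
  rw [Finset.empty_union]
  unfold msort
  rw [Finset.sort_toFinset, hpu, Finset.length_sort, Finset.card_univ]
  simp

end IntegralLemmas

end Grassmann
namespace Grassmann

section WeightLemmas

variable (M : Type) [Fintype M] [LinearOrder M]

/-- The `i`-th factor of the weight. -/
def gi (i : M) : Car (Idx M) := gone + (2 : ℂ) • gmul (psibar M i) (psi M i)

/-- The two generator indices attached to `i`. -/
def Pr (i : M) : Finset (Idx M) := {fB M i, fT M i}

lemma Pr_eq_pairs (i : M) : Pr M i = pairs M {i} := by
  rw [pairs, Finset.image_singleton, Finset.image_singleton, Pr, Finset.insert_eq]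

lemma pairs_mono {S T : Finset M} (h : S ⊆ T) : pairs M S ⊆ pairs M T := fun x hx => by
  rw [mem_pairs'] at hx ⊢
  exact h hx

lemma pairs_sdiff (A B : Finset M) : pairs M (A \ B) = pairs M A \ pairs M B := by
  ext x
  rw [Finset.mem_sdiff, mem_pairs', mem_pairs', mem_pairs', Finset.mem_sdiff]

lemma pairs_union (A B : Finset M) : pairs M (A ∪ B) = pairs M A ∪ pairs M B := by
  ext x
  rw [Finset.mem_union, mem_pairs', mem_pairs', mem_pairs', Finset.mem_union]

lemma gmul_psibar_psi (i : M) :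
    gmul (psibar M i) (psi M i) = (-1 : ℂ) • delta (Pr M i) := by
  have hne : fB M i ≠ fT M i := fB_ne_fT M i i
  funext u
  show gmul (delta {fT M i}) (delta {fB M i}) u = _
  rw [gmul_delta_left]
  by_cases hu : u = Pr M i
  · subst hu
    have h1 : {fT M i} ⊆ Pr M i := by
      rw [Finset.singleton_subset_iff, Pr, Finset.mem_insert, Finset.mem_singleton]
      exact Or.inr rfl
    have h2 : Pr M i \ {fT M i} = {fB M i} := by
      ext x
      simp only [Finset.mem_sdiff, Pr, Finset.mem_insert, Finset.mem_singleton]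
      constructor
      · rintro ⟨rfl | rfl, h⟩
        · rfl
        · exact absurd rfl h
      · rintro rfl
        exact ⟨Or.inl rfl, hne⟩
    rw [if_pos h1, h2]
    have hms : mulSign {fT M i} ({fB M i} : Finset (Idx M)) = -1 := by
      rw [mulSign_of_forall_lt, Finset.card_singleton, Finset.card_singleton]
      · norm_num
      · intro a ha b hb
        rw [Finset.mem_singleton] at ha hb
        subst ha; subst hb
        exact fB_lt_fT M i i
    rw [hms]
    simp [delta]
  · have hR : ((-1 : ℂ) • delta (Pr M i)) u = 0 := by
      simp only [Pi.smul_apply, smul_eq_mul, delta, if_neg hu, mul_zero]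
    rw [hR]
    by_cases h1 : {fT M i} ⊆ u
    · rw [if_pos h1]
      have h2 : u \ {fT M i} ≠ {fB M i} := by
        intro hc
        apply hu
        have := congrArg (insert (fT M i)) hc
        rw [Finset.sdiff_singleton_eq_erase,
          Finset.insert_erase (h1 (Finset.mem_singleton_self _))] at this
        rw [this]
        ext x
        rw [Finset.mem_insert, Finset.mem_singleton, Pr, Finset.mem_insert,
          Finset.mem_singleton]
        tauto
      simp only [delta, if_neg h2, mul_zero]
    · rw [if_neg h1]

lemma gi_eq (i : M) : gi M i = delta ∅ + (-2 : ℂ) • delta (Pr M i) := by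
  unfold gi
  rw [gmul_psibar_psi, gone_eq_delta, smul_smul]
  norm_num

lemma gmul_gi (i : M) (f : Car (Idx M)) (u : Finset (Idx M)) :
    gmul (gi M i) f u = f u +
      (-2) * (if Pr M i ⊆ u then mulSign (Pr M i) (u \ Pr M i) * f (u \ Pr M i) else 0) := by
  rw [gi_eq, gmul_add_left, gmul_smul_left]
  rw [Pi.add_apply, Pi.smul_apply, smul_eq_mul, gmul_delta_empty_left, gmul_delta_left]

lemma mulSign_Pr_pairs (i : M) (T : Finset M) (h : ∀ j ∈ T, i < j) :
    mulSign (Pr M i) (pairs M T) = (-1) ^ T.card := by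
  have hps : Pr M i = {fB M i} ∪ {fT M i} := by
    rw [Pr, Finset.insert_eq]
  rw [hps, mulSign_union_left _ (by
    rw [Finset.disjoint_singleton]; exact fB_ne_fT M i i)]
  have h1 : mulSign ({fB M i} : Finset (Idx M)) (pairs M T) = 1 := by
    refine mulSign_of_forall_not fun a ha b hb => ?_
    rw [Finset.mem_singleton] at ha
    subst ha
    revert hb
    refine idx_rec M (P := fun b => b ∈ pairs M T → ¬ b < fB M i) (fun c j hj => ?_) b
    rw [mem_pairs] at hj
    cases c
    · rw [fB_lt_fB]
      exact fun hc => lt_asymm hc (h j hj)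
    · exact not_fT_lt_fB M j i
  have h2 : mulSign ({fT M i} : Finset (Idx M)) (pairs M T) = (-1) ^ T.card := by
    rw [pairs, mulSign_union_right _ (disjoint_imageB_imageT M T T)]
    have h3 : mulSign ({fT M i} : Finset (Idx M)) (T.image (fB M))
        = (-1) ^ T.card := by
      rw [mulSign_of_forall_lt, Finset.card_singleton,
        Finset.card_image_of_injective _ (fB_injective M), one_mul]
      intro a ha b hb
      rw [Finset.mem_singleton] at ha
      subst ha
      rw [Finset.mem_image] at hb
      obtain ⟨j, -, rfl⟩ := hb
      exact fB_lt_fT M j i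
    have h4 : mulSign ({fT M i} : Finset (Idx M)) (T.image (fT M)) = 1 := by
      refine mulSign_of_forall_not fun a ha b hb => ?_
      rw [Finset.mem_singleton] at ha
      subst ha
      rw [Finset.mem_image] at hb
      obtain ⟨j, hj, rfl⟩ := hb
      rw [fT_lt_fT]
      exact fun hc => lt_asymm hc (h j hj)
    rw [h3, h4, mul_one]
  rw [h1, h2, one_mul]

lemma weight_list_spec : ∀ (l : List M), l.Pairwise (· < ·) →
    (∀ S : Finset M, S ⊆ l.toFinset →
      lprod (l.map (gi M)) (pairs M S)
        = (-1) ^ ((S.card + 1).choose 2) * 2 ^ S.card) ∧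
    (∀ u : Finset (Idx M), (∀ S : Finset M, S ⊆ l.toFinset → u ≠ pairs M S) →
      lprod (l.map (gi M)) u = 0) := by
  intro l
  induction l with
  | nil =>
    intro _
    constructor
    · intro S hS
      have hS0 : S = ∅ := Finset.subset_empty.1 (by simpa using hS)
      subst hS0
      show gone (pairs M ∅) = _
      rw [pairs_empty]
      simp [gone]
    · intro u hu
      have := hu ∅ (by simp)
      rw [pairs_empty] at this
      show gone u = 0
      rw [gone, if_neg this]
  | cons i l ih =>
    intro hl
    have hsm := List.pairwise_cons.1 hl
    have IH := ih hsm.2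
    have hil : i ∉ l.toFinset := fun hc =>
      lt_irrefl i (hsm.1 i (List.mem_toFinset.1 hc))
    have hlt : ∀ j ∈ l.toFinset, i < j := fun j hj => hsm.1 j (List.mem_toFinset.1 hj)
    have hshow : ∀ u, lprod ((i :: l).map (gi M)) u = gmul (gi M i) (lprod (l.map (gi M))) u :=
      fun u => rfl
    constructor
    · intro S hS
      rw [hshow, gmul_gi]
      rw [List.toFinset_cons] at hS
      by_cases hiS : i ∈ S
      · have hPr : Pr M i ⊆ pairs M S := by
          rw [Pr_eq_pairs]
          exact pairs_mono M (Finset.singleton_subset_iff.2 hiS)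
        have hz : lprod (l.map (gi M)) (pairs M S) = 0 := by
          refine IH.2 _ fun S' hS' hc => ?_
          have := pairs_inj M hc
          subst this
          exact hil (hS' hiS)
        have hdiff : pairs M S \ Pr M i = pairs M (S.erase i) := by
          rw [Pr_eq_pairs, ← pairs_sdiff, Finset.sdiff_singleton_eq_erase]
        have herase_sub : S.erase i ⊆ l.toFinset := fun j hj => by
          rcases Finset.mem_insert.1 (hS (Finset.mem_of_mem_erase hj)) with rfl | h
          · exact absurd rfl (Finset.ne_of_mem_erase hj)
          · exact h
        have hms := mulSign_Pr_pairs M i (S.erase i)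
          (fun j hj => hlt j (herase_sub hj))
        rw [hz, if_pos hPr, hdiff, hms, IH.1 _ herase_sub, zero_add]
        have hk : S.card = (S.erase i).card + 1 := (Finset.card_erase_add_one hiS).symm
        rw [hk]
        have hch2 : ((S.erase i).card + 1 + 1).choose 2
            = ((S.erase i).card + 1).choose 2 + ((S.erase i).card + 1) := by
          rw [Nat.choose_succ_succ, Nat.choose_one_right]
          exact Nat.add_comm _ _
        rw [hch2, pow_add, pow_add]
        ring
      · have hS' : S ⊆ l.toFinset := fun x hx => by
          rcases Finset.mem_insert.1 (hS hx) with rfl | h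
          · exact absurd hx hiS
          · exact h
        have hnP : ¬ Pr M i ⊆ pairs M S := fun hc => by
          have : fB M i ∈ pairs M S := hc (by rw [Pr]; exact Finset.mem_insert_self _ _)
          rw [mem_pairs] at this
          exact hiS this
        rw [if_neg hnP, mul_zero, add_zero, IH.1 S hS']
    · intro u hu
      rw [hshow, gmul_gi]
      rw [List.toFinset_cons] at hu
      have h1 : lprod (l.map (gi M)) u = 0 :=
        IH.2 u fun S' hS' => hu S' (hS'.trans (Finset.subset_insert i _))
      rw [h1, zero_add]
      by_cases hP : Pr M i ⊆ u
      · have h2 : lprod (l.map (gi M)) (u \ Pr M i) = 0 := by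
          refine IH.2 _ fun S' hS' hc => ?_
          refine hu (insert i S') (Finset.insert_subset_insert i hS') ?_
          have hcu : u = Pr M i ∪ pairs M S' := by
            rw [← hc, Finset.union_comm, Finset.sdiff_union_of_subset hP]
          rw [hcu, Pr_eq_pairs, ← pairs_union, ← Finset.insert_eq]
        rw [if_pos hP, h2, mul_zero, mul_zero]
      · rw [if_neg hP, mul_zero]

lemma weight_apply_pairs (S : Finset M) :
    weight M (pairs M S) = (-1) ^ ((S.card + 1).choose 2) * 2 ^ S.card := by
  have hw : weight M = lprod ((msort M Finset.univ).map (gi M)) := rfl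
  rw [hw]
  exact (weight_list_spec M _ ((Finset.sortedLT_sort _).pairwise)).1 S
    (by rw [Finset.sort_toFinset]; exact Finset.subset_univ S)

lemma weight_apply_zero (u : Finset (Idx M)) (h : ∀ S : Finset M, u ≠ pairs M S) :
    weight M u = 0 := by
  have hw : weight M = lprod ((msort M Finset.univ).map (gi M)) := rfl
  rw [hw]
  exact (weight_list_spec M _ ((Finset.sortedLT_sort _).pairwise)).2 u fun S _ => h S

end WeightLemmas

end Grassmann
namespace Grassmann

lemma chs (k : ℕ) : (k + 1).choose 2 = k.choose 2 + k := by
  rw [Nat.choose_succ_succ, Nat.choose_one_right]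
  exact Nat.add_comm _ _

lemma choose_add_two (m d : ℕ) : (m + d).choose 2 = m.choose 2 + d.choose 2 + m * d := by
  induction d with
  | zero => simp
  | succ d ih =>
    rw [show m + (d + 1) = (m + d) + 1 from rfl, chs, ih, chs, Nat.mul_succ]
    ring

lemma neg_one_pow_mul_self (m : ℕ) : ((-1 : ℂ)) ^ (m * m) = (-1) ^ m := by
  rcases Nat.even_or_odd m with he | ho
  · rw [(he.mul_right m).neg_one_pow, he.neg_one_pow]
  · rw [(ho.mul ho).neg_one_pow, ho.neg_one_pow]

lemma final_arith (n m : ℕ) (hm : m ≤ n) :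
    (-1 : ℂ) ^ n * ((-1) ^ (n.choose 2) * ((-1) ^ (m * m) *
        ((-1) ^ ((n - m) * m) * ((-1) ^ ((n - m + 1).choose 2) * 2 ^ (n - m)))))
      = (-1) ^ (m.choose 2) * 2 ^ (n - m) := by
  obtain ⟨d, rfl⟩ : ∃ d, n = m + d := ⟨n - m, by omega⟩
  have hd : m + d - m = d := by omega
  rw [hd, neg_one_pow_mul_self]
  have hcollect : ((-1 : ℂ)) ^ (m + d) * ((-1) ^ ((m + d).choose 2) * ((-1) ^ m *
        ((-1) ^ (d * m) * ((-1) ^ ((d + 1).choose 2) * 2 ^ d))))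
      = (-1) ^ ((m + d) + (m + d).choose 2 + m + d * m + (d + 1).choose 2) * 2 ^ d := by
    rw [pow_add, pow_add, pow_add, pow_add]
    ring
  rw [hcollect]
  obtain ⟨K, hK⟩ : ∃ K, (m + d) + (m + d).choose 2 + m + d * m + (d + 1).choose 2
      = m.choose 2 + 2 * K := by
    refine ⟨m * d + d.choose 2 + d + m, ?_⟩
    rw [choose_add_two m d, chs d, Nat.mul_comm d m]
    generalize m * d = p
    generalize m.choose 2 = q
    generalize d.choose 2 = r
    omega
  rw [hK, pow_add, pow_mul, neg_one_sq, one_pow, mul_one]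

section NmonoLemmas

variable (M : Type) [Fintype M] [LinearOrder M]

/-- The index set of the monomial `Ψ̄_I Ψ_J`. -/
def Tset (I J : Finset M) : Finset (Idx M) := I.image (fT M) ∪ J.image (fB M)

lemma list_toFinset_map {α β : Type} [DecidableEq α] [DecidableEq β] (f : α → β)
    (l : List α) : (l.map f).toFinset = l.toFinset.image f := by
  ext x
  simp

lemma mem_Tset {I J : Finset M} (b : Bool) (j : M) :
    toLex (b, j) ∈ Tset M I J ↔ (b = true ∧ j ∈ I) ∨ (b = false ∧ j ∈ J) := by
  cases b <;> simp [Tset, fB, fT, Finset.mem_image]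

lemma psibarProd_eq (I : Finset M) : psibarProd M I = delta (I.image (fT M)) := by
  have h1 : (msort M I).map (psibar M) = ((msort M I).map (fT M)).map gen := by
    rw [List.map_map]
    rfl
  have h2 : ((msort M I).map (fT M)).Pairwise (· < ·) :=
    List.Pairwise.map _ (fun a b h => fT_strictMono M h) ((Finset.sortedLT_sort I).pairwise)
  show lprod ((msort M I).map (psibar M)) = _
  rw [h1, lprod_map_gen _ h2, list_toFinset_map]
  unfold msort
  rw [Finset.sort_toFinset]

lemma psiProd_eq (J : Finset M) : psiProd M J = delta (J.image (fB M)) := by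
  have h1 : (msort M J).map (psi M) = ((msort M J).map (fB M)).map gen := by
    rw [List.map_map]
    rfl
  have h2 : ((msort M J).map (fB M)).Pairwise (· < ·) :=
    List.Pairwise.map _ (fun a b h => fB_strictMono M h) ((Finset.sortedLT_sort J).pairwise)
  show lprod ((msort M J).map (psi M)) = _
  rw [h1, lprod_map_gen _ h2, list_toFinset_map]
  unfold msort
  rw [Finset.sort_toFinset]

lemma nmono_eq (I J : Finset M) :
    nmono M I J = ((-1 : ℂ) ^ (I.card * J.card)) • delta (Tset M I J) := by
  have hdisj : Disjoint (I.image (fT M)) (J.image (fB M)) :=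
    (disjoint_imageB_imageT M J I).symm
  show gmul (psibarProd M I) (psiProd M J) = _
  rw [psibarProd_eq, psiProd_eq]
  funext u
  rw [gmul_delta_left, Pi.smul_apply, smul_eq_mul]
  by_cases hu : u = Tset M I J
  · subst hu
    have h1 : I.image (fT M) ⊆ Tset M I J := Finset.subset_union_left
    have h2 : Tset M I J \ I.image (fT M) = J.image (fB M) :=
      Finset.union_sdiff_cancel_left hdisj
    have e1 : delta (J.image (fB M)) (J.image (fB M)) = 1 := by simp [delta]
    have e2 : delta (Tset M I J) (Tset M I J) = 1 := by simp [delta]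
    rw [if_pos h1, h2, e1, e2]
    rw [mulSign_of_forall_lt (fun a ha b hb => by
      rw [Finset.mem_image] at ha hb
      obtain ⟨i, -, rfl⟩ := ha
      obtain ⟨j, -, rfl⟩ := hb
      exact fB_lt_fT M j i)]
    rw [Finset.card_image_of_injective _ (fT_injective M),
      Finset.card_image_of_injective _ (fB_injective M)]
  · have e0 : delta (Tset M I J) u = 0 := by simp [delta, hu]
    rw [e0, mul_zero]
    by_cases h1 : I.image (fT M) ⊆ u
    · rw [if_pos h1]
      have h2 : u \ I.image (fT M) ≠ J.image (fB M) := by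
        intro hc
        apply hu
        rw [Tset, ← hc, Finset.union_sdiff_of_subset h1]
      simp only [delta, if_neg h2, mul_zero]
    · rw [if_neg h1]

lemma trace_wintegral_eq (I J : Finset M) :
    (-1 : ℂ) ^ (Fintype.card M) * wintegral M (nmono M I J)
      = if I = J then
          (-1 : ℂ) ^ (I.card.choose 2) * 2 ^ (Fintype.card M - I.card)
        else 0 := by
  have hw : wintegral M (nmono M I J) = gintegral M (gmul (weight M) (nmono M I J)) := rfl
  rw [hw, nmono_eq, gmul_smul_right, gintegral_eq, Pi.smul_apply, smul_eq_mul,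
    gmul_delta_right, if_pos (Finset.subset_univ _)]
  by_cases hIJ : I = J
  · subst hIJ
    rw [if_pos rfl]
    have hcomp : Finset.univ \ Tset M I I = pairs M Iᶜ := by
      ext x
      revert x
      refine idx_rec M (P := fun x =>
        x ∈ Finset.univ \ Tset M I I ↔ x ∈ pairs M Iᶜ) (fun b j => ?_)
      rw [Finset.mem_sdiff, mem_pairs, Finset.mem_compl, mem_Tset]
      cases b <;> simp
    have hd1 : Disjoint (I.image (fT M)) (I.image (fB M)) :=
      (disjoint_imageB_imageT M I I).symm
    have hms : mulSign (pairs M Iᶜ) (Tset M I I)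
        = (-1) ^ (Iᶜ.card * I.card) := by
      rw [pairs, Tset, mulSign_union_left _ (disjoint_imageB_imageT M Iᶜ Iᶜ),
        mulSign_union_right _ hd1, mulSign_union_right _ hd1]
      have hA : mulSign (Iᶜ.image (fB M)) (I.image (fT M)) = 1 := by
        refine mulSign_of_forall_not fun a ha b hb => ?_
        rw [Finset.mem_image] at ha hb
        obtain ⟨k, -, rfl⟩ := ha
        obtain ⟨j, -, rfl⟩ := hb
        exact not_fT_lt_fB M j k
      have hB : mulSign (Iᶜ.image (fB M)) (I.image (fB M)) = mulSign Iᶜ I :=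
        mulSign_image (fB M) (fB_strictMono M) _ _
      have hC : mulSign (Iᶜ.image (fT M)) (I.image (fT M)) = mulSign Iᶜ I :=
        mulSign_image (fT M) (fT_strictMono M) _ _
      have hD : mulSign (Iᶜ.image (fT M)) (I.image (fB M))
          = (-1) ^ (Iᶜ.card * I.card) := by
        rw [mulSign_of_forall_lt (fun a ha b hb => by
          rw [Finset.mem_image] at ha hb
          obtain ⟨k, -, rfl⟩ := ha
          obtain ⟨j, -, rfl⟩ := hb
          exact fB_lt_fT M j k)]
        rw [Finset.card_image_of_injective _ (fT_injective M),
          Finset.card_image_of_injective _ (fB_injective M)]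
      rw [hA, hB, hC, hD, one_mul, mul_comm (mulSign Iᶜ I) ((-1 : ℂ) ^ (Iᶜ.card * I.card)),
        ← mul_assoc, mul_comm (mulSign Iᶜ I), mul_assoc, mulSign_mul_self, mul_one]
    rw [hcomp, weight_apply_pairs, hms, Finset.card_compl]
    exact final_arith (Fintype.card M) I.card (Finset.card_le_univ I)
  · rw [if_neg hIJ]
    have hz : weight M (Finset.univ \ Tset M I J) = 0 := by
      refine weight_apply_zero M _ fun S hc => hIJ ?_
      ext j
      have h1 := Finset.ext_iff.1 hc (toLex (true, j))
      have h2 := Finset.ext_iff.1 hc (toLex (false, j))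
      rw [Finset.mem_sdiff, mem_pairs, mem_Tset] at h1 h2
      simp at h1 h2
      tauto
    rw [hz, mul_zero, mul_zero, mul_zero, mul_zero]

end NmonoLemmas

end Grassmann
namespace Grassmann

section FockLemmas

variable (M : Type) [Fintype M] [LinearOrder M]

/-- Occupation basis vector. -/
def eb (t : Finset M) : Fock M := fun s => if s = t then 1 else 0

lemma annihL_apply (i : M) (f : Fock M) (s : Finset M) :
    annihL M i f s
      = if i ∈ s then 0 else (-1) ^ ((s.filter fun j => j < i).card) * f (insert i s) := rfl

lemma createL_apply (i : M) (f : Fock M) (s : Finset M) :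
    createL M i f s
      = if i ∈ s then (-1) ^ (((s.erase i).filter fun j => j < i).card) * f (s.erase i)
        else 0 := rfl

lemma annihL_eb (i : M) (t : Finset M) :
    annihL M i (eb M t)
      = if i ∈ t then ((-1 : ℂ) ^ ((t.filter fun j => j < i).card)) • eb M (t.erase i)
        else 0 := by
  funext s
  rw [annihL_apply]
  by_cases hit : i ∈ t
  · rw [if_pos hit, Pi.smul_apply, smul_eq_mul]
    by_cases his : i ∈ s
    · rw [if_pos his, eb]
      have hne : s ≠ t.erase i := fun hc => by
        rw [hc] at his
        exact absurd his (Finset.notMem_erase i t)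
      rw [if_neg hne, mul_zero]
    · rw [if_neg his, eb, eb]
      by_cases hs : s = t.erase i
      · subst hs
        have hins : insert i (t.erase i) = t := Finset.insert_erase hit
        rw [hins, if_pos rfl, if_pos rfl]
        have hf : ((t.erase i).filter fun j => j < i) = t.filter fun j => j < i := by
          rw [Finset.filter_erase]
          exact Finset.erase_eq_of_notMem (by simp)
        rw [hf]
      · have hne : insert i s ≠ t := fun hc => hs (by rw [← hc, Finset.erase_insert his])
        rw [if_neg hs, if_neg hne, mul_zero, mul_zero]
  · rw [if_neg hit]
    show _ = (0 : Fock M) s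
    rw [Pi.zero_apply]
    by_cases his : i ∈ s
    · rw [if_pos his]
    · rw [if_neg his, eb]
      have hne : insert i s ≠ t := fun hc => hit (hc ▸ Finset.mem_insert_self i s)
      rw [if_neg hne, mul_zero]

lemma createL_eb (i : M) (u : Finset M) :
    createL M i (eb M u)
      = if i ∈ u then 0
        else ((-1 : ℂ) ^ ((u.filter fun j => j < i).card)) • eb M (insert i u) := by
  funext s
  rw [createL_apply]
  by_cases hiu : i ∈ u
  · rw [if_pos hiu]
    show _ = (0 : Fock M) s
    rw [Pi.zero_apply]
    by_cases his : i ∈ s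
    · rw [if_pos his, eb]
      have hne : s.erase i ≠ u := fun hc => (hc ▸ Finset.notMem_erase i s) hiu
      rw [if_neg hne, mul_zero]
    · rw [if_neg his]
  · rw [if_neg hiu, Pi.smul_apply, smul_eq_mul]
    by_cases his : i ∈ s
    · rw [if_pos his]
      by_cases hs : s = insert i u
      · subst hs
        have hse : (insert i u).erase i = u := Finset.erase_insert hiu
        rw [hse, eb, eb, if_pos rfl, if_pos rfl]
      · have hne : s.erase i ≠ u := fun hc =>
          hs (by rw [← hc, Finset.insert_erase his])
        rw [eb, eb, if_neg hne, if_neg hs, mul_zero, mul_zero]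
    · rw [if_neg his, eb]
      have hne : s ≠ insert i u := fun hc => his (hc ▸ Finset.mem_insert_self i u)
      rw [if_neg hne, mul_zero]

lemma annih_prod : ∀ (l : List M), l.Pairwise (· < ·) → ∀ t : Finset M,
    ((l.map (annihL M)).prod) (eb M t)
      = if l.toFinset ⊆ t then
          ((-1 : ℂ) ^ (∑ j ∈ l.toFinset, (t.filter fun x => x < j).card))
            • eb M (t \ l.toFinset)
        else 0 := by
  intro l
  induction l with
  | nil =>
    intro _ t
    simp
  | cons j l ih =>
    intro hl t
    have hsm := List.pairwise_cons.1 hl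
    have hjl : j ∉ l.toFinset := fun hc => lt_irrefl j (hsm.1 j (List.mem_toFinset.1 hc))
    rw [List.map_cons, List.prod_cons, Module.End.mul_apply, ih hsm.2 t]
    by_cases hsub : l.toFinset ⊆ t
    · rw [if_pos hsub, LinearMap.map_smul, annihL_eb]
      by_cases hjt : j ∈ t
      · have hj' : j ∈ t \ l.toFinset := Finset.mem_sdiff.2 ⟨hjt, hjl⟩
        rw [if_pos hj']
        have hcond : (j :: l).toFinset ⊆ t := by
          rw [List.toFinset_cons]
          exact Finset.insert_subset hjt hsub
        rw [if_pos hcond]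
        have hset : (t \ l.toFinset).erase j = t \ (j :: l).toFinset := by
          rw [List.toFinset_cons]
          ext x
          simp only [Finset.mem_erase, Finset.mem_sdiff, Finset.mem_insert]
          tauto
        have hsign : (((t \ l.toFinset)).filter fun x => x < j).card
            = (t.filter fun x => x < j).card := by
          congr 1
          ext x
          simp only [Finset.mem_filter, Finset.mem_sdiff, List.mem_toFinset]
          constructor
          · tauto
          · rintro ⟨hx, hlt⟩
            exact ⟨⟨hx, fun hc => absurd (hsm.1 x hc) (not_lt.2 hlt.le)⟩, hlt⟩
        rw [smul_smul, hset, hsign, ← pow_add]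
        congr 2
        rw [List.toFinset_cons, Finset.sum_insert hjl]
        omega
      · rw [if_neg (show j ∉ t \ l.toFinset from fun hc => hjt (Finset.mem_sdiff.1 hc).1),
          smul_zero]
        rw [if_neg (fun hc : (j :: l).toFinset ⊆ t =>
          hjt (hc (by rw [List.toFinset_cons]; exact Finset.mem_insert_self j _)))]
    · rw [if_neg hsub, map_zero,
        if_neg (fun hc => hsub (fun x hx =>
          hc (by rw [List.toFinset_cons]; exact Finset.mem_insert_of_mem hx)))]

lemma create_prod : ∀ (l : List M), l.Pairwise (· < ·) → ∀ u : Finset M,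
    ((l.map (createL M)).prod) (eb M u)
      = if Disjoint l.toFinset u then
          ((-1 : ℂ) ^ (∑ i ∈ l.toFinset, (u.filter fun x => x < i).card))
            • eb M (u ∪ l.toFinset)
        else 0 := by
  intro l
  induction l with
  | nil =>
    intro _ u
    simp
  | cons i l ih =>
    intro hl u
    have hsm := List.pairwise_cons.1 hl
    have hil : i ∉ l.toFinset := fun hc => lt_irrefl i (hsm.1 i (List.mem_toFinset.1 hc))
    rw [List.map_cons, List.prod_cons, Module.End.mul_apply, ih hsm.2 u]
    by_cases hdis : Disjoint l.toFinset u
    · rw [if_pos hdis, LinearMap.map_smul, createL_eb]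
      by_cases hiu : i ∈ u
      · have hi' : i ∈ u ∪ l.toFinset := Finset.mem_union_left _ hiu
        rw [if_pos hi', smul_zero]
        rw [if_neg (fun hc : Disjoint ((i :: l).toFinset) u => by
          rw [List.toFinset_cons, Finset.disjoint_insert_left] at hc
          exact hc.1 hiu)]
      · have hi' : i ∉ u ∪ l.toFinset := by
          rw [Finset.mem_union]
          rintro (h | h)
          · exact hiu h
          · exact hil h
        rw [if_neg hi']
        have hcond : Disjoint ((i :: l).toFinset) u := by
          rw [List.toFinset_cons, Finset.disjoint_insert_left]
          exact ⟨hiu, hdis⟩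
        rw [if_pos hcond]
        have hset : insert i (u ∪ l.toFinset) = u ∪ (i :: l).toFinset := by
          rw [List.toFinset_cons]
          ext x
          simp only [Finset.mem_insert, Finset.mem_union]
          tauto
        have hsign : (((u ∪ l.toFinset)).filter fun x => x < i).card
            = (u.filter fun x => x < i).card := by
          congr 1
          ext x
          simp only [Finset.mem_filter, Finset.mem_union, List.mem_toFinset]
          constructor
          · rintro ⟨hx | hx, hlt⟩
            · exact ⟨hx, hlt⟩
            · exact absurd (hsm.1 x hx) (not_lt.2 hlt.le)
          · rintro ⟨hx, hlt⟩
            exact ⟨Or.inl hx, hlt⟩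
        rw [smul_smul, hset, hsign, ← pow_add]
        congr 2
        rw [List.toFinset_cons, Finset.sum_insert hil]
        omega
    · rw [if_neg hdis, map_zero,
        if_neg (fun hc : Disjoint ((i :: l).toFinset) u => by
          rw [List.toFinset_cons, Finset.disjoint_insert_left] at hc
          exact hdis hc.2)]

lemma sum_filter_lt (I : Finset M) :
    ∑ j ∈ I, ((I.filter fun x => x < j).card) = I.card.choose 2 := by
  refine Finset.induction_on_max I (by simp) (fun a s hmax ih => ?_)
  have has : a ∉ s := fun hc => lt_irrefl a (hmax a hc)
  rw [Finset.sum_insert has]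
  have h1 : ((insert a s).filter fun x => x < a) = s := by
    ext x
    simp only [Finset.mem_filter, Finset.mem_insert]
    constructor
    · rintro ⟨rfl | hx, hlt⟩
      · exact absurd hlt (lt_irrefl x)
      · exact hx
    · intro hx
      exact ⟨Or.inr hx, hmax x hx⟩
  have h2 : ∀ j ∈ s, ((insert a s).filter fun x => x < j) = s.filter fun x => x < j := by
    intro j hj
    ext x
    simp only [Finset.mem_filter, Finset.mem_insert]
    constructor
    · rintro ⟨rfl | hx, hlt⟩
      · exact absurd hlt (not_lt.2 (hmax j hj).le)
      · exact ⟨hx, hlt⟩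
    · rintro ⟨hx, hlt⟩
      exact ⟨Or.inr hx, hlt⟩
  rw [h1, Finset.sum_congr rfl (fun j hj => by rw [h2 j hj]), ih,
    Finset.card_insert_of_notMem has, chs]
  exact Nat.add_comm _ _

lemma card_supersets (I : Finset M) :
    (Finset.univ.filter fun t : Finset M => I ⊆ t).card
      = 2 ^ (Fintype.card M - I.card) := by
  rw [← Finset.card_compl I, ← Finset.card_powerset]
  refine Finset.card_bij' (fun t _ => t \ I) (fun s _ => s ∪ I) ?_ ?_ ?_ ?_
  · intro t ht
    rw [Finset.mem_powerset]
    intro x hx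
    rw [Finset.mem_compl]
    exact (Finset.mem_sdiff.1 hx).2
  · intro s hs
    rw [Finset.mem_filter]
    exact ⟨Finset.mem_univ _, Finset.subset_union_right⟩
  · intro t ht
    rw [Finset.mem_filter] at ht
    exact Finset.sdiff_union_of_subset ht.2
  · intro s hs
    rw [Finset.mem_powerset] at hs
    show (s ∪ I) \ I = s
    rw [Finset.union_sdiff_right]
    exact Finset.sdiff_eq_self_of_disjoint
      (Finset.disjoint_left.2 fun x hx hxI => (Finset.mem_compl.1 (hs hx)) hxI)

lemma cOp_diag (I J : Finset M) (t : Finset M) :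
    cOp M I J (eb M t) t
      = if I = J ∧ I ⊆ t then (-1 : ℂ) ^ (I.card.choose 2) else 0 := by
  have hJt : (msort M J).toFinset = J := Finset.sort_toFinset _ _
  have hIt : (msort M I).toFinset = I := Finset.sort_toFinset _ _
  show (((msort M I).map (createL M)).prod * ((msort M J).map (annihL M)).prod) (eb M t) t = _
  rw [Module.End.mul_apply,
    annih_prod M (msort M J) ((Finset.sortedLT_sort J).pairwise) t, hJt]
  by_cases hJsub : J ⊆ t
  · rw [if_pos hJsub, LinearMap.map_smul,
      create_prod M (msort M I) ((Finset.sortedLT_sort I).pairwise) _, hIt]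
    by_cases hdisj : Disjoint I (t \ J)
    · rw [if_pos hdisj]
      rw [Pi.smul_apply, Pi.smul_apply, smul_eq_mul, smul_eq_mul]
      by_cases heq : (t \ J) ∪ I = t
      · have hIJ : I = J := by
          ext x
          constructor
          · intro hxI
            have hxt : x ∈ t := heq ▸ Finset.mem_union_right _ hxI
            by_contra hxJ
            have hx' : x ∈ t \ J := Finset.mem_sdiff.2 ⟨hxt, hxJ⟩
            exact (Finset.disjoint_right.1 hdisj hx') hxI
          · intro hxJ
            have hxt : x ∈ t := hJsub hxJ
            have hnd : x ∉ t \ J := fun hc => (Finset.mem_sdiff.1 hc).2 hxJ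
            have hxu : x ∈ (t \ J) ∪ I := heq.symm ▸ hxt
            rcases Finset.mem_union.1 hxu with h | h
            · exact absurd h hnd
            · exact h
        subst hIJ
        rw [if_pos ⟨rfl, fun x hx => hJsub hx⟩]
        rw [eb, if_pos heq.symm, mul_one]
        have hsplit : ∀ j : M, (t.filter fun x => x < j).card
            = ((t \ I).filter fun x => x < j).card + (I.filter fun x => x < j).card := by
          intro j
          conv_lhs => rw [show t = (t \ I) ∪ I from (Finset.sdiff_union_of_subset hJsub).symm]
          rw [Finset.filter_union, Finset.card_union_of_disjoint
            (Finset.disjoint_filter_filter Finset.sdiff_disjoint)]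
        rw [← pow_add]
        have hexp : (∑ j ∈ I, (t.filter fun x => x < j).card)
              + ∑ j ∈ I, ((t \ I).filter fun x => x < j).card
            = 2 * (∑ j ∈ I, ((t \ I).filter fun x => x < j).card) + I.card.choose 2 := by
          rw [Finset.sum_congr rfl (fun j _ => hsplit j), Finset.sum_add_distrib,
            sum_filter_lt]
          omega
        rw [hexp, pow_add, pow_mul, neg_one_sq, one_pow, one_mul]
      · have hne : t ≠ (t \ J) ∪ I := fun hc => heq hc.symm
        rw [eb, if_neg hne, mul_zero, mul_zero]
        rw [if_neg (fun hc : I = J ∧ I ⊆ t => by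
          rcases hc with ⟨rfl, hsub⟩
          exact heq (Finset.sdiff_union_of_subset hsub))]
    · rw [if_neg hdisj, smul_zero, Pi.zero_apply]
      rw [if_neg (fun hc : I = J ∧ I ⊆ t => by
        rcases hc with ⟨rfl, hsub⟩
        exact hdisj Finset.disjoint_sdiff)]
  · rw [if_neg hJsub, map_zero, Pi.zero_apply]
    rw [if_neg (fun hc : I = J ∧ I ⊆ t => hJsub (hc.1 ▸ hc.2))]

lemma trace_cOp (I J : Finset M) :
    LinearMap.trace ℂ (Fock M) (cOp M I J)
      = if I = J then
          (-1 : ℂ) ^ (I.card.choose 2) * 2 ^ (Fintype.card M - I.card)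
        else 0 := by
  have hsingle : ∀ t : Finset M, (Pi.single t 1 : Fock M) = eb M t := by
    intro t
    funext s
    rw [Pi.single_apply]
    rfl
  rw [LinearMap.trace_eq_matrix_trace ℂ (Pi.basisFun ℂ (Finset M)), Matrix.trace]
  have hdiag : ∀ t : Finset M,
      (LinearMap.toMatrix (Pi.basisFun ℂ (Finset M)) (Pi.basisFun ℂ (Finset M))
        (cOp M I J)).diag t = cOp M I J (eb M t) t := by
    intro t
    rw [Matrix.diag_apply, LinearMap.toMatrix_apply, Pi.basisFun_repr, Pi.basisFun_apply,
      hsingle]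
  rw [Finset.sum_congr rfl fun t _ => (hdiag t).trans (cOp_diag M I J t)]
  by_cases hIJ : I = J
  · subst hIJ
    rw [if_pos rfl]
    have hsum : (∑ t : Finset M, if I = I ∧ I ⊆ t then ((-1 : ℂ)) ^ (I.card.choose 2) else 0)
        = ∑ t ∈ Finset.univ.filter (fun t : Finset M => I ⊆ t),
            (-1 : ℂ) ^ (I.card.choose 2) := by
      rw [Finset.sum_filter]
      exact Finset.sum_congr rfl fun t _ => by simp
    rw [hsum, Finset.sum_const, nsmul_eq_mul, card_supersets]
    push_cast
    ring
  · rw [if_neg hIJ]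
    refine Finset.sum_eq_zero fun t _ => ?_
    rw [if_neg (fun hc => hIJ hc.1)]

end FockLemmas

end Grassmann
namespace Grassmann

section Decomp

variable (M : Type) [Fintype M] [LinearOrder M]

lemma neg_one_pow_mul_neg_one_pow (k : ℕ) : ((-1 : ℂ)) ^ k * (-1) ^ k = 1 := by
  rw [← pow_add, ← two_mul, pow_mul, neg_one_sq, one_pow]

lemma decomp (g : Car (Idx M)) :
    g = ∑ p : Finset M × Finset M,
        (((-1 : ℂ) ^ (p.1.card * p.2.card)) * g (Tset M p.1 p.2)) • nmono M p.1 p.2 := by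
  funext u
  rw [Finset.sum_apply]
  have hp₀ : ((Finset.univ.filter fun i => fT M i ∈ u : Finset M),
      (Finset.univ.filter fun j => fB M j ∈ u : Finset M)) ∈
        (Finset.univ : Finset (Finset M × Finset M)) := Finset.mem_univ _
  set P₁ : Finset M := Finset.univ.filter fun i => fT M i ∈ u with hP₁
  set P₂ : Finset M := Finset.univ.filter fun j => fB M j ∈ u with hP₂
  have hT : Tset M P₁ P₂ = u := by
    ext x
    revert x
    refine idx_rec M (P := fun x => x ∈ Tset M P₁ P₂ ↔ x ∈ u) (fun b j => ?_)
    rw [mem_Tset]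
    cases b
    · simp [hP₂, fB]
    · simp [hP₁, fT]
  have hzero : ∀ p ∈ (Finset.univ : Finset (Finset M × Finset M)), p ≠ (P₁, P₂) →
      ((((-1 : ℂ) ^ (p.1.card * p.2.card)) * g (Tset M p.1 p.2)) • nmono M p.1 p.2) u
        = 0 := by
    intro p _ hp
    rw [Pi.smul_apply, smul_eq_mul, nmono_eq, Pi.smul_apply, smul_eq_mul]
    have hdz : delta (Tset M p.1 p.2) u = 0 := by
      have hne : u ≠ Tset M p.1 p.2 := by
        intro hcu
        apply hp
        have h1 : p.1 = P₁ := by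
          ext i
          have hmem : fT M i ∈ u ↔ i ∈ p.1 := by
            rw [hcu, show fT M i = toLex (true, i) from rfl, mem_Tset]
            simp
          rw [hP₁]
          constructor
          · intro hi
            exact Finset.mem_filter.2 ⟨Finset.mem_univ _, hmem.2 hi⟩
          · intro hi
            exact hmem.1 (Finset.mem_filter.1 hi).2
        have h2 : p.2 = P₂ := by
          ext j
          have hmem : fB M j ∈ u ↔ j ∈ p.2 := by
            rw [hcu, show fB M j = toLex (false, j) from rfl, mem_Tset]
            simp
          rw [hP₂]
          constructor
          · intro hj
            exact Finset.mem_filter.2 ⟨Finset.mem_univ _, hmem.2 hj⟩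
          · intro hj
            exact hmem.1 (Finset.mem_filter.1 hj).2
        exact Prod.ext h1 h2
      simp [delta, hne]
    rw [hdz, mul_zero, mul_zero]
  rw [Finset.sum_eq_single (P₁, P₂) hzero (fun h => absurd (Finset.mem_univ _) h)]
  rw [Pi.smul_apply, smul_eq_mul, nmono_eq, Pi.smul_apply, smul_eq_mul]
  show g u = ((-1 : ℂ) ^ (P₁.card * P₂.card) * g (Tset M P₁ P₂)) *
      ((-1 : ℂ) ^ (P₁.card * P₂.card) * delta (Tset M P₁ P₂) u)
  have hd1 : delta (Tset M P₁ P₂) u = 1 := by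
    simp [delta, hT]
  rw [hd1, mul_one, hT]
  rw [show ((-1 : ℂ) ^ (P₁.card * P₂.card) * g u) * (-1 : ℂ) ^ (P₁.card * P₂.card)
      = ((-1 : ℂ) ^ (P₁.card * P₂.card) * (-1 : ℂ) ^ (P₁.card * P₂.card)) * g u from by
    ring]
  rw [neg_one_pow_mul_neg_one_pow, one_mul]

end Decomp

end Grassmann
open Grassmann in
/-- the trace on the fermion Fock space is a Grassmann integral:
`tr(A) = (-1)^{|M|} ∫𝒟(Ψ̄,Ψ) Θ(A)`, and in particular
`tr(c*_{i₁}⋯c*_{i_m}c_{i₁}⋯c_{i_m}) = (-1)^{m(m-1)/2} 2^{|M|-m}`. -/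
theorem statement13 (M : Type) [Fintype M] [LinearOrder M]
    (Θ : (Fock M →ₗ[ℂ] Fock M) → Car (Idx M))
    (hlin : IsLinearMap ℂ Θ) (hbij : Function.Bijective Θ)
    (hmono : ∀ I J : Finset M, Θ (cOp M I J) = nmono M I J) :
    (∀ A : Fock M →ₗ[ℂ] Fock M,
      LinearMap.trace ℂ (Fock M) A =
        (-1 : ℂ) ^ (Fintype.card M) * wintegral M (Θ A)) ∧
    (∀ I : Finset M,
      LinearMap.trace ℂ (Fock M) (cOp M I I) =
        (-1 : ℂ) ^ (I.card * (I.card - 1) / 2) * 2 ^ (Fintype.card M - I.card)) := by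
  classical
  have wadd : ∀ f g : Car (Idx M), wintegral M (f + g) = wintegral M f + wintegral M g := by
    intro f g
    show gintegral M (gmul (weight M) (f + g)) = gintegral M (gmul (weight M) f)
      + gintegral M (gmul (weight M) g)
    rw [gmul_add_right, gintegral_eq, gintegral_eq, gintegral_eq, Pi.add_apply]
    ring
  have wsmul : ∀ (c : ℂ) (f : Car (Idx M)), wintegral M (c • f) = c * wintegral M f := by
    intro c f
    show gintegral M (gmul (weight M) (c • f)) = c * gintegral M (gmul (weight M) f)
    rw [gmul_smul_right, gintegral_eq, gintegral_eq, Pi.smul_apply, smul_eq_mul]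
    ring
  have wsum : ∀ (s : Finset (Finset M × Finset M)) (F : Finset M × Finset M → Car (Idx M)),
      wintegral M (∑ p ∈ s, F p) = ∑ p ∈ s, wintegral M (F p) := by
    intro s F
    induction s using Finset.induction_on with
    | empty =>
      rw [Finset.sum_empty, Finset.sum_empty]
      have h0 : (0 : Car (Idx M)) = (0 : ℂ) • (0 : Car (Idx M)) := by simp
      rw [h0, wsmul]
      ring
    | insert _ _ hne ih =>
      rw [Finset.sum_insert hne, Finset.sum_insert hne, wadd, ih]
  have key : ∀ I J : Finset M,
      LinearMap.trace ℂ (Fock M) (cOp M I J)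
        = (-1 : ℂ) ^ (Fintype.card M) * wintegral M (nmono M I J) := by
    intro I J
    rw [trace_cOp, trace_wintegral_eq]
  have LΘ : ∀ (s : Finset (Finset M × Finset M)) (c : Finset M × Finset M → ℂ)
      (F : Finset M × Finset M → (Fock M →ₗ[ℂ] Fock M)),
      Θ (∑ p ∈ s, c p • F p) = ∑ p ∈ s, c p • Θ (F p) := by
    intro s c F
    induction s using Finset.induction_on with
    | empty =>
      rw [Finset.sum_empty, Finset.sum_empty]
      have h0 : (0 : Fock M →ₗ[ℂ] Fock M) = (0 : ℂ) • (0 : Fock M →ₗ[ℂ] Fock M) := by simp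
      rw [h0, hlin.map_smul]
      simp
    | insert _ _ hne ih =>
      rw [Finset.sum_insert hne, Finset.sum_insert hne, hlin.map_add, ih, hlin.map_smul]
  constructor
  · intro A
    have hdec := decomp M (Θ A)
    have hA : A = ∑ p : Finset M × Finset M,
        (((-1 : ℂ) ^ (p.1.card * p.2.card)) * Θ A (Tset M p.1 p.2)) • cOp M p.1 p.2 := by
      apply hbij.injective
      rw [LΘ]
      rw [Finset.sum_congr rfl fun p _ => by rw [hmono p.1 p.2]]
      exact hdec
    calc LinearMap.trace ℂ (Fock M) A
        = ∑ p : Finset M × Finset M,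
            (((-1 : ℂ) ^ (p.1.card * p.2.card)) * Θ A (Tset M p.1 p.2))
              * LinearMap.trace ℂ (Fock M) (cOp M p.1 p.2) := by
          conv_lhs => rw [hA]
          rw [map_sum]
          exact Finset.sum_congr rfl fun p _ => by
            rw [LinearMap.map_smul, smul_eq_mul]
      _ = ∑ p : Finset M × Finset M,
            (((-1 : ℂ) ^ (p.1.card * p.2.card)) * Θ A (Tset M p.1 p.2))
              * ((-1 : ℂ) ^ (Fintype.card M) * wintegral M (nmono M p.1 p.2)) :=
          Finset.sum_congr rfl fun p _ => by rw [key]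
      _ = (-1 : ℂ) ^ (Fintype.card M) * wintegral M (Θ A) := by
          conv_rhs => rw [hdec]
          rw [wsum, Finset.mul_sum]
          refine Finset.sum_congr rfl fun p _ => ?_
          rw [wsmul]
          ring
  · intro I
    rw [trace_cOp, if_pos rfl, Nat.choose_two_right]
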